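/- arXiv:1012.4370 — 4 statements merged into one kernel-verified Lean document; each statement's English description precedes it below -/
import Mathlib

section
/- Let L be a countable first-order language and let K be a class of finitely generated L-structures closed under isomorphism having HP, JEP, AP and satisfying condition (*) (for every n, only finitely many quantifier-free types of n-tuples are realized in members of K), and let M be the Fraïssé limit of K. Then the complete theory of M has quantifier elimination: every L-formula φ(x̄) is semantically equivalent modulo Th(M) to a quantifier-free L-formula in the same free variables. -/
open FirstOrder Language CategoryTheory

universe u v w

namespace QEProof

open Set FirstOrder.Language FirstOrder.Language.Substructure FirstOrder.Language.Structure

variable {L : FirstOrder.Language.{u, v}}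

/-- The quantifier-free type of a tuple. -/
def qfT (L : FirstOrder.Language.{u, v}) {A : Type*} [L.Structure A] {n : ℕ}
    (a : Fin n → A) : Set (L.Formula (Fin n)) :=
  { φ : L.Formula (Fin n) | φ.IsQF ∧ φ.Realize a }

lemma qf_realize_embedding {A : Type*} {B : Type*} [L.Structure A] [L.Structure B]
    {α : Type*} {φ : L.Formula α} (hφ : φ.IsQF) (f : A ↪[L] B) (v : α → A) :
    φ.Realize (⇑f ∘ v) ↔ φ.Realize v := by
  have h := hφ.realize_embedding f (v := v) (xs := (default : Fin 0 → A))
  rwa [Subsingleton.elim (⇑f ∘ (default : Fin 0 → A)) (default : Fin 0 → B)] at h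

lemma qfT_embedding {A : Type*} {B : Type*} [L.Structure A] [L.Structure B]
    {n : ℕ} (f : A ↪[L] B) (a : Fin n → A) :
    qfT L (⇑f ∘ a) = qfT L a := by
  ext χ
  exact and_congr_right fun hχ => qf_realize_embedding hχ f a

/-- Two tuples with the same quantifier-free type in an ultrahomogeneous structure are
conjugate under an automorphism. -/
lemma exists_equiv_of_qfT_eq {M : Type w} [L.Structure M]
    (hM : L.IsUltrahomogeneous M) {n : ℕ} {a b : Fin n → M}
    (h : qfT L a = qfT L b) : ∃ g : M ≃[L] M, ⇑g ∘ a = b := by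
  classical
  have hiff : ∀ φ : L.Formula (Fin n), φ.IsQF → (φ.Realize a ↔ φ.Realize b) := by
    intro φ hφ
    constructor
    · intro hr
      have hx : φ ∈ qfT L b := by rw [← h]; exact ⟨hφ, hr⟩
      exact hx.2
    · intro hr
      have hx : φ ∈ qfT L a := by rw [h]; exact ⟨hφ, hr⟩
      exact hx.2
  have key : ∀ t s : L.Term (Fin n),
      (t.realize a = s.realize a ↔ t.realize b = s.realize b) := by
    intro t s
    have := hiff (t.equal s) ((BoundedFormula.IsAtomic.equal _ _).isQF)
    simpa only [Formula.realize_equal] using this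
  have relkey : ∀ (m : ℕ) (R : L.Relations m) (ts : Fin m → L.Term (Fin n)),
      (RelMap R (fun i => (ts i).realize a) ↔ RelMap R (fun i => (ts i).realize b)) := by
    intro m R ts
    have := hiff (R.formula ts) ((BoundedFormula.IsAtomic.rel _ _).isQF)
    simpa only [Formula.realize_rel] using this
  set c := Substructure.closure L (Set.range a) with hc
  have hmem : ∀ x : M, x ∈ c → ∃ t : L.Term (Fin n), t.realize a = x := by
    intro x hx
    obtain ⟨t, ht⟩ := Substructure.mem_closure_iff_exists_term.1 hx
    refine ⟨t.relabel (fun y => y.2.choose), ?_⟩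
    rw [Term.realize_relabel, ← ht]
    congr 1
    funext y
    exact y.2.choose_spec
  set tm : c → L.Term (Fin n) := fun x => (hmem x x.2).choose with htm
  have tmspec : ∀ x : c, (tm x).realize a = (x : M) := fun x => (hmem x x.2).choose_spec
  let e : c ↪[L] M :=
  { toFun := fun x => (tm x).realize b
    inj' := by
      intro x y hxy
      have hxy' : (tm x).realize a = (tm y).realize a := (key _ _).2 hxy
      exact Subtype.ext ((tmspec x).symm.trans (hxy'.trans (tmspec y)))
    map_fun' := by
      intro m F xs
      have h1 : (tm (funMap F xs)).realize a
          = (Term.func F (fun i => tm (xs i))).realize a := by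
        rw [tmspec]
        have h0 : ((funMap F xs : c) : M) = funMap F (fun i => ((xs i : M))) := rfl
        rw [h0]
        simp only [Term.realize]
        congr 1
        funext i
        exact (tmspec (xs i)).symm
      have h2 := (key _ _).1 h1
      show (tm (funMap F xs)).realize b = funMap F (fun i => (tm (xs i)).realize b)
      rw [h2]
      simp only [Term.realize]
    map_rel' := by
      intro m R xs
      have hcast : (fun i => (tm (xs i)).realize a) = fun i => ((xs i : M)) := by
        funext i
        exact tmspec (xs i)
      have hterm := (relkey m R (fun i => tm (xs i))).symm
      rw [hcast] at hterm
      show RelMap R (fun i => (tm (xs i)).realize b) ↔ RelMap R (fun i => ((xs i : M)))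
      exact hterm }
  obtain ⟨g, hg⟩ := hM c (Substructure.fg_closure (Set.finite_range a)) e
  refine ⟨g, funext fun i => ?_⟩
  have hai : a i ∈ c := Substructure.subset_closure (Set.mem_range_self i)
  have h1 : e ⟨a i, hai⟩ = g (a i) := by rw [hg]; rfl
  have h2 : (tm ⟨a i, hai⟩).realize a = (Term.var i : L.Term (Fin n)).realize a :=
    tmspec ⟨a i, hai⟩
  have h3 := (key _ _).1 h2
  calc (⇑g ∘ a) i = g (a i) := rfl
    _ = (tm ⟨a i, hai⟩).realize b := h1.symm
    _ = (Term.var i : L.Term (Fin n)).realize b := h3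
    _ = b i := rfl

lemma realize_iff_of_qfT_eq {M : Type w} [L.Structure M]
    (hM : L.IsUltrahomogeneous M) {n : ℕ} {a b : Fin n → M}
    (h : qfT L a = qfT L b) (φ : L.Formula (Fin n)) :
    φ.Realize a ↔ φ.Realize b := by
  obtain ⟨g, hg⟩ := exists_equiv_of_qfT_eq hM h
  rw [← hg]
  exact (StrongHomClass.realize_formula g φ).symm

lemma exists_qf_conj {A : Type*} [L.Structure A] {n : ℕ} {ι : Type*} [DecidableEq ι]
    (T : Finset ι) (χ : ι → L.Formula (Fin n)) (hχ : ∀ i, (χ i).IsQF) :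
    ∃ θ : L.Formula (Fin n), θ.IsQF ∧
      ∀ v : Fin n → A, (θ.Realize v ↔ ∀ i ∈ T, (χ i).Realize v) := by
  induction T using Finset.induction_on with
  | empty => exact ⟨⊤, BoundedFormula.IsQF.top, fun v => by simp⟩
  | @insert i T hi ih =>
    obtain ⟨θ, hθ, hθv⟩ := ih
    refine ⟨(χ i) ⊓ θ, (hχ i).inf hθ, fun v => ?_⟩
    simp [Formula.realize_inf, hθv v]

lemma exists_qf_disj {A : Type*} [L.Structure A] {n : ℕ} {ι : Type*} [DecidableEq ι]
    (T : Finset ι) (χ : ι → L.Formula (Fin n)) (hχ : ∀ i, (χ i).IsQF) :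
    ∃ θ : L.Formula (Fin n), θ.IsQF ∧
      ∀ v : Fin n → A, (θ.Realize v ↔ ∃ i ∈ T, (χ i).Realize v) := by
  induction T using Finset.induction_on with
  | empty => exact ⟨⊥, BoundedFormula.isQF_bot, fun v => by simp⟩
  | @insert i T hi ih =>
    obtain ⟨θ, hθ, hθv⟩ := ih
    refine ⟨(χ i) ⊔ θ, (hχ i).sup hθ, fun v => ?_⟩
    simp [Formula.realize_sup, hθv v]

end QEProof

open QEProof

/-- If `K` is a class of finitely generated structures for a countable language,
closed under isomorphism, with HP, JEP, AP and (*), and `M` is the Fraïssé limit of `K`, then the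
complete theory of `M` has quantifier elimination: every formula `φ(x̄)` is semantically
equivalent modulo `Th(M)` to a quantifier-free formula in the same free variables. -/
theorem statement2 (L : FirstOrder.Language.{u, v})
    [Countable (Σ l, L.Functions l)] [Countable (Σ l, L.Relations l)]
    (K : Set (Bundled.{w} L.Structure))
    (K_fg : ∀ M : Bundled.{w} L.Structure, M ∈ K → Structure.FG L M)
    (K_iso : ∀ M N : Bundled.{w} L.Structure, Nonempty (M ≃[L] N) → M ∈ K → N ∈ K)
    (K_HP : Hereditary K) (K_JEP : JointEmbedding K) (K_AP : Amalgamation K)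
    (K_star : ∀ n : ℕ,
      { p : Set (L.Formula (Fin n)) |
        ∃ N ∈ K, ∃ a : Fin n → (N : Type w),
          p = { φ : L.Formula (Fin n) | φ.IsQF ∧ φ.Realize a } }.Finite)
    (M : Type w) [L.Structure M] [Countable M]
    (M_lim : IsFraisseLimit K M) :
    ∀ (n : ℕ) (φ : L.Formula (Fin n)), ∃ ψ : L.Formula (Fin n), ψ.IsQF ∧
      ∀ (N : (L.completeTheory M).ModelType) (v : Fin n → N),
        φ.Realize v ↔ ψ.Realize v := by
  classical
  intro n φ
  -- The set of quantifier-free types realized in `M` is finite.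
  set SM : Set (Set (L.Formula (Fin n))) :=
    Set.range (fun a : Fin n → M => qfT L a) with hSMdef
  have hSMfin : SM.Finite := by
    refine (K_star n).subset ?_
    rintro p ⟨a, rfl⟩
    set c := Substructure.closure L (Set.range a) with hc
    have hcfg : c.FG := Substructure.fg_closure (Set.finite_range a)
    have hmem : ∀ i, a i ∈ c :=
      fun i => Substructure.subset_closure (Set.mem_range_self i)
    refine ⟨⟨c, inferInstance⟩, ?_, fun i => (⟨a i, hmem i⟩ : c), ?_⟩
    · rw [← M_lim.age]
      exact ⟨(Substructure.fg_iff_structure_fg c).1 hcfg, ⟨c.subtype⟩⟩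
    · have h1 : qfT L (⇑c.subtype ∘ (fun i => (⟨a i, hmem i⟩ : c)))
          = qfT L (fun i => (⟨a i, hmem i⟩ : c)) :=
        qfT_embedding c.subtype _
      have h2 : (⇑c.subtype ∘ (fun i => (⟨a i, hmem i⟩ : c))) = a := rfl
      rw [h2] at h1
      exact h1
  -- Separation of distinct quantifier-free types by quantifier-free formulas.
  have sep : ∀ p ∈ SM, ∀ q ∈ SM, p ≠ q → ∃ χ : L.Formula (Fin n), χ.IsQF ∧
      (∀ x : Fin n → M, qfT L x = p → χ.Realize x) ∧
      (∀ y : Fin n → M, qfT L y = q → ¬ χ.Realize y) := by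
    rintro p hp q hq hne
    have hex : ∃ χ, (χ ∈ p ∧ χ ∉ q) ∨ (χ ∈ q ∧ χ ∉ p) := by
      by_contra hcon
      push_neg at hcon
      exact hne (Set.ext fun χ => ⟨fun h => (hcon χ).1 h, fun h => (hcon χ).2 h⟩)
    obtain ⟨χ, hχ⟩ := hex
    rcases hχ with ⟨hin, hout⟩ | ⟨hin, hout⟩
    · obtain ⟨a0, ha0⟩ := hp
      have hqf : χ.IsQF := by rw [← ha0] at hin; exact hin.1
      refine ⟨χ, hqf, ?_, ?_⟩
      · intro x hx
        rw [← hx] at hin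
        exact hin.2
      · intro y hy hreal
        exact hout (hy ▸ (⟨hqf, hreal⟩ : χ ∈ qfT L y))
    · obtain ⟨b0, hb0⟩ := hq
      have hqf : χ.IsQF := by rw [← hb0] at hin; exact hin.1
      refine ⟨χ.not, hqf.not, ?_, ?_⟩
      · intro x hx
        rw [Formula.realize_not]
        intro hreal
        exact hout (hx ▸ (⟨hqf, hreal⟩ : χ ∈ qfT L x))
      · intro y hy
        rw [Formula.realize_not, not_not]
        rw [← hy] at hin
        exact hin.2
  -- Each quantifier-free type realized in `M` is isolated by a quantifier-free formula.
  have iso : ∀ p : Set (L.Formula (Fin n)), ∃ θ : L.Formula (Fin n), θ.IsQF ∧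
      (p ∈ SM →
        ((∀ x : Fin n → M, qfT L x = p → θ.Realize x) ∧
         (∀ y : Fin n → M, θ.Realize y → qfT L y = p))) := by
    intro p
    by_cases hp : p ∈ SM
    · have hchi : ∀ q : Set (L.Formula (Fin n)), ∃ χ : L.Formula (Fin n), χ.IsQF ∧
          ((q ∈ SM ∧ q ≠ p) →
            ((∀ x : Fin n → M, qfT L x = p → χ.Realize x) ∧
             (∀ y : Fin n → M, qfT L y = q → ¬ χ.Realize y))) := by
        intro q
        by_cases hq : q ∈ SM ∧ q ≠ p
        · obtain ⟨χ, h1, h2, h3⟩ := sep p hp q hq.1 (Ne.symm hq.2)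
          exact ⟨χ, h1, fun _ => ⟨h2, h3⟩⟩
        · exact ⟨⊤, BoundedFormula.IsQF.top, fun h => absurd h hq⟩
      choose χ hχqf hχ using hchi
      obtain ⟨θ, hθqf, hθ⟩ := exists_qf_conj (A := M) (hSMfin.toFinset.erase p) χ hχqf
      refine ⟨θ, hθqf, fun _ => ⟨?_, ?_⟩⟩
      · intro x hx
        rw [hθ x]
        intro q hq
        rw [Finset.mem_erase, Set.Finite.mem_toFinset] at hq
        exact (hχ q ⟨hq.2, hq.1⟩).1 x hx
      · intro y hy
        by_contra hne
        have hqy : qfT L y ∈ SM := ⟨y, rfl⟩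
        have hmem : qfT L y ∈ hSMfin.toFinset.erase p :=
          Finset.mem_erase.2 ⟨hne, hSMfin.mem_toFinset.2 hqy⟩
        exact (hχ (qfT L y) ⟨hqy, hne⟩).2 y rfl ((hθ y).1 hy (qfT L y) hmem)
    · exact ⟨⊤, BoundedFormula.IsQF.top, fun h => absurd h hp⟩
  choose θ hθqf hθ using iso
  -- The quantifier-free formula `ψ`.
  set Sφ : Finset (Set (L.Formula (Fin n))) :=
    hSMfin.toFinset.filter (fun p => ∃ x : Fin n → M, qfT L x = p ∧ φ.Realize x) with hSφ
  obtain ⟨ψ, hψqf, hψ⟩ := exists_qf_disj (A := M) Sφ θ hθqf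
  -- The equivalence holds in `M`.
  have main : ∀ v : Fin n → M, φ.Realize v ↔ ψ.Realize v := by
    intro v
    rw [hψ v]
    constructor
    · intro hv
      refine ⟨qfT L v, ?_, ?_⟩
      · rw [hSφ, Finset.mem_filter, Set.Finite.mem_toFinset]
        exact ⟨⟨v, rfl⟩, v, rfl, hv⟩
      · exact (hθ (qfT L v) ⟨v, rfl⟩).1 v rfl
    · rintro ⟨p, hpmem, hpv⟩
      rw [hSφ, Finset.mem_filter, Set.Finite.mem_toFinset] at hpmem
      obtain ⟨x, hx, hφx⟩ := hpmem.2
      have hvp : qfT L v = p := (hθ p hpmem.1).2 v hpv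
      have hq : qfT L x = qfT L v := hx.trans hvp.symm
      exact (realize_iff_of_qfT_eq M_lim.ultrahomogeneous hq φ).1 hφx
  -- Transfer the equivalence to all models of `Th(M)`.
  refine ⟨ψ, hψqf, ?_⟩
  have hσ : (BoundedFormula.relabel (Sum.inr : Fin n → Empty ⊕ Fin n) (φ.iff ψ)).alls ∈ L.completeTheory M := by
    rw [mem_completeTheory]
    have : ∀ xs : Fin n → M,
        (BoundedFormula.relabel (Sum.inr : Fin n → Empty ⊕ Fin n) (φ.iff ψ)).Realize default xs := by
      intro xs
      rw [Formula.realize_relabel_sumInr, Formula.realize_iff]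
      exact main xs
    exact BoundedFormula.realize_alls.2 this
  intro N v
  have hN : N.Carrier ⊨ (BoundedFormula.relabel (Sum.inr : Fin n → Empty ⊕ Fin n) (φ.iff ψ)).alls :=
    (L.completeTheory M).realize_sentence_of_mem hσ
  have hNv := BoundedFormula.realize_alls.1 hN v
  rw [Formula.realize_relabel_sumInr, Formula.realize_iff] at hNv
  exact hNv
end

section
/- The theory T_E has TP2, the tree property of the second kind, witnessed by the formula φ(x; y, u, v) = E_2(x y, u v): there exist a model M of T_E and triples (ā^i_j)_{i,j<ω} of elements of M such that (i) for every i < ω and all j ≠ k < ω, M satisfies ¬∃x (φ(x, ā^i_j) ∧ φ(x, ā^i_k)), and (ii) for every function η : ω → ω and every m < ω, M satisfies ∃x ⋀_{i<m} φ(x, ā^i_{η(i)}). -/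
open FirstOrder Language CategoryTheory

/-- The one-sorted language `L_E` with, for each `n ≥ 1`, a single relation symbol `E_n`
of arity `2n` (here `E_{n+1}` has arity `(n+1) + (n+1)`), and no other symbols. -/
def LangE : FirstOrder.Language :=
  ⟨fun _ => Empty, fun k => { n : ℕ // k = (n + 1) + (n + 1) }⟩

/-- The relation symbol `E_{n+1}`, of arity `(n+1) + (n+1)`. -/
def ESym (n : ℕ) : LangE.Relations ((n + 1) + (n + 1)) := ⟨n, rfl⟩

/-- The interpretation of `E_{n+1}` in an `L_E`-structure `M`, regarded as a binary
relation on `(n+1)`-tuples of `M`. -/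
def ERel {M : Type*} [LangE.Structure M] (n : ℕ) (a b : Fin (n + 1) → M) : Prop :=
  Structure.RelMap (ESym n) (Fin.append a b)

/-- An `L_E`-structure satisfies `T⁰_E` if each `E_n` is an equivalence relation on `n`-tuples
and the `n`-tuples containing a repeated entry form exactly one `E_n`-equivalence class. -/
def IsT0Model (M : Type*) [LangE.Structure M] : Prop :=
  ∀ n : ℕ, Equivalence (ERel (M := M) n) ∧
    ∀ a b : Fin (n + 1) → M, ¬ Function.Injective a →
      (ERel n a b ↔ ¬ Function.Injective b)

/-- `K_E` is the class of all finite `L_E`-structures satisfying `T⁰_E`. -/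
def KE : Set (Bundled LangE.Structure) :=
  { M | Finite M ∧ IsT0Model M }

instance : IsEmpty ((l : ℕ) × LangE.Functions l) := ⟨fun x => Empty.elim x.2⟩

section AuxTP2
-- helpers
lemma comp_append {α β : Type*} {m n : ℕ} (f : α → β) (a : Fin m → α) (b : Fin n → α) :
    f ∘ Fin.append a b = Fin.append (f ∘ a) (f ∘ b) := by
  funext i
  induction i using Fin.addCases with
  | left i => simp [Fin.append_left]
  | right i => simp [Fin.append_right]

lemma eRel_map {N M : Type*} [LangE.Structure N] [LangE.Structure M]
    (f : N ↪[LangE] M) {n : ℕ} (a b : Fin (n+1) → N) :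
    ERel n (⇑f ∘ a) (⇑f ∘ b) ↔ ERel n a b := by
  unfold ERel
  rw [← comp_append]
  exact f.map_rel _ _

lemma inj_pair {α : Type*} {x y : α} (h : x ≠ y) : Function.Injective ![x, y] := by
  intro i j hij
  fin_cases i <;> fin_cases j <;> simp_all

variable {ME : Type} [LangE.Structure ME]

def subOf (s : Set ME) : LangE.Substructure ME := ⟨s, fun f => f.elim⟩

lemma subOf_mem_age (s : Set ME) (hs : s.Finite) :
    Bundled.mk ↥(subOf s) ∈ LangE.age ME := by
  have : Finite ↥(subOf s) := hs.to_subtype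
  exact Language.age.fg_substructure (Substructure.FG.of_finite)

lemma subOf_T0 [Countable ME] (h : IsFraisseLimit KE ME) (s : Set ME) (hs : s.Finite) :
    IsT0Model ↥(subOf s) := by
  have hmem := subOf_mem_age s hs
  rw [h.age] at hmem
  exact hmem.2

lemma coe_comp_inj {s : Set ME} {n : ℕ} (a : Fin (n+1) → ↥(subOf s)) :
    Function.Injective (fun i => ((a i : ME))) ↔ Function.Injective a := by
  constructor
  · intro ha i j hij
    exact ha (by simp [hij])
  · intro ha
    exact Subtype.val_injective.comp ha

lemma eRel_sub {s : Set ME} {n : ℕ} (a b : Fin (n+1) → ↥(subOf s)) :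
    ERel n (fun i => ((a i : ME))) (fun i => ((b i : ME))) ↔ ERel n a b := by
  have := eRel_map (subOf s).subtype a b
  simpa [Function.comp_def] using this

lemma hT0_of_limit [Countable ME] (h : IsFraisseLimit KE ME) : IsT0Model ME := by
  intro n
  constructor
  · constructor
    · intro a
      have hT := subOf_T0 h (Set.range a) (Set.finite_range a)
      let a' : Fin (n+1) → ↥(subOf (Set.range a)) := fun i => ⟨a i, ⟨i, rfl⟩⟩
      have := (eRel_sub a' a').2 ((hT n).1.refl a')
      simpa using this
    · intro a b hab
      have hT := subOf_T0 h (Set.range a ∪ Set.range b)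
        ((Set.finite_range a).union (Set.finite_range b))
      let a' : Fin (n+1) → ↥(subOf (Set.range a ∪ Set.range b)) :=
        fun i => ⟨a i, Or.inl ⟨i, rfl⟩⟩
      let b' : Fin (n+1) → ↥(subOf (Set.range a ∪ Set.range b)) :=
        fun i => ⟨b i, Or.inr ⟨i, rfl⟩⟩
      have h1 : ERel n a' b' := by
        rw [← eRel_sub]; simpa using hab
      have := (eRel_sub b' a').2 ((hT n).1.symm h1)
      simpa using this
    · intro a b c hab hbc
      have hT := subOf_T0 h (Set.range a ∪ Set.range b ∪ Set.range c)
        (((Set.finite_range a).union (Set.finite_range b)).union (Set.finite_range c))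
      let a' : Fin (n+1) → ↥(subOf (Set.range a ∪ Set.range b ∪ Set.range c)) :=
        fun i => ⟨a i, Or.inl (Or.inl ⟨i, rfl⟩)⟩
      let b' : Fin (n+1) → ↥(subOf (Set.range a ∪ Set.range b ∪ Set.range c)) :=
        fun i => ⟨b i, Or.inl (Or.inr ⟨i, rfl⟩)⟩
      let c' : Fin (n+1) → ↥(subOf (Set.range a ∪ Set.range b ∪ Set.range c)) :=
        fun i => ⟨c i, Or.inr ⟨i, rfl⟩⟩
      have h1 : ERel n a' b' := by rw [← eRel_sub]; simpa using hab
      have h2 : ERel n b' c' := by rw [← eRel_sub]; simpa using hbc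
      have := (eRel_sub a' c').2 ((hT n).1.trans h1 h2)
      simpa using this
  · intro a b ha
    have hT := subOf_T0 h (Set.range a ∪ Set.range b)
      ((Set.finite_range a).union (Set.finite_range b))
    let a' : Fin (n+1) → ↥(subOf (Set.range a ∪ Set.range b)) :=
      fun i => ⟨a i, Or.inl ⟨i, rfl⟩⟩
    let b' : Fin (n+1) → ↥(subOf (Set.range a ∪ Set.range b)) :=
      fun i => ⟨b i, Or.inr ⟨i, rfl⟩⟩
    have ha' : ¬ Function.Injective a' := by
      intro hinj
      exact ha ((coe_comp_inj a').2 hinj)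
    have hb' : Function.Injective b ↔ Function.Injective b' := by
      exact (coe_comp_inj b')
    have := (hT n).2 a' b' ha'
    rw [← eRel_sub] at this
    constructor
    · intro hr
      intro hbinj
      exact (this.1 hr) (hb'.1 hbinj)
    · intro hbn
      exact this.2 (fun hinj => hbn ((coe_comp_inj b').2 hinj))

section BConstruction

variable (hT0 : IsT0Model ME) (s : Set ME) (F : ME → Option (ME × ME))

def tSetoid (n : ℕ) : Setoid (Fin (n+1) → ME) := ⟨ERel n, (hT0 n).1⟩

abbrev Lab (n : ℕ) : Type :=
  (Fin (n+1) → Option ↥(subOf s)) ⊕ Option (Quotient (tSetoid hT0 n))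

open Classical in
noncomputable def lab (n : ℕ) (t : Fin (n+1) → Option ↥(subOf s)) : Lab hT0 s n :=
  if Function.Injective t then
    if h : ∀ i, (t i).isSome then
      Sum.inr (some (Quotient.mk (tSetoid hT0 n) (fun i => (((t i).get (h i) : ↥(subOf s)) : ME))))
    else if hc : t 0 = none ∧ ∃ p : ME × ME, (t (Fin.last n)).bind (fun y => F ↑y) = some p then
      Sum.inr (some (Quotient.mk (tSetoid hT0 n)
        (fun i => if i = 0 then hc.2.choose.1 else hc.2.choose.2)))
    else Sum.inl t
  else Sum.inr none

noncomputable def BStr : LangE.Structure (Option ↥(subOf s)) where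
  funMap := fun f _ => f.elim
  RelMap := fun {l} r x =>
    lab hT0 s F r.1 (fun i => x (Fin.cast r.2.symm (Fin.castAdd _ i))) =
    lab hT0 s F r.1 (fun i => x (Fin.cast r.2.symm (Fin.natAdd _ i)))

lemma eRelB_iff {n : ℕ} (a b : Fin (n+1) → Option ↥(subOf s)) :
    @ERel (Option ↥(subOf s)) (BStr hT0 s F) n a b
      ↔ lab hT0 s F n a = lab hT0 s F n b := by
  have key : ∀ (t1 t2 : Fin (n+1) → Option ↥(subOf s)), t1 = a → t2 = b →
      ((lab hT0 s F n t1 = lab hT0 s F n t2) ↔ (lab hT0 s F n a = lab hT0 s F n b)) := by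
    rintro _ _ rfl rfl; exact Iff.rfl
  have hcast : ∀ j : Fin ((n+1)+(n+1)), Fin.cast (ESym n).2.symm j = j := fun j => by
    ext; rfl
  exact key _ _ (funext fun i => by exact Fin.append_left a b i)
    (funext fun i => by exact Fin.append_right a b i)

lemma lab_not_inj {n : ℕ} {t : Fin (n+1) → Option ↥(subOf s)} (ht : ¬ Function.Injective t) :
    lab hT0 s F n t = Sum.inr none := by
  unfold lab; rw [if_neg ht]

lemma lab_ne_rep {n : ℕ} {t : Fin (n+1) → Option ↥(subOf s)} (ht : Function.Injective t) :
    lab hT0 s F n t ≠ Sum.inr none := by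
  unfold lab; rw [if_pos ht]; split_ifs <;> simp

lemma lab_old {n : ℕ} (x : Fin (n+1) → ↥(subOf s)) (hx : Function.Injective x) :
    lab hT0 s F n (fun i => some (x i)) =
      Sum.inr (some (Quotient.mk (tSetoid hT0 n) (fun i => (x i : ME)))) := by
  have hinj : Function.Injective (fun i => some (x i)) := (Option.some_injective _).comp hx
  have hall : ∀ i, ((fun i => some (x i)) i).isSome = true := fun _ => rfl
  unfold lab
  rw [if_pos hinj, dif_pos hall]
  rfl

lemma lab_old_iff {n : ℕ} (a b : Fin (n+1) → ↥(subOf s)) :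
    (lab hT0 s F n (fun i => some (a i)) = lab hT0 s F n (fun i => some (b i))) ↔
      ERel n (fun i => (a i : ME)) (fun i => (b i : ME)) := by
  have hsi : ∀ (c : Fin (n+1) → ↥(subOf s)), Function.Injective (fun i => some (c i)) ↔
      Function.Injective c :=
    fun c => ⟨fun hc i j hij => hc (by simp [hij]), fun hc => (Option.some_injective _).comp hc⟩
  by_cases hA : Function.Injective a <;> by_cases hB : Function.Injective b
  · rw [lab_old hT0 s F a hA, lab_old hT0 s F b hB]
    simp only [Sum.inr.injEq, Option.some.injEq]
    exact ⟨fun he => Quotient.exact he, fun hr => Quotient.sound hr⟩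
  · rw [lab_old hT0 s F a hA, lab_not_inj hT0 s F ((hsi b).not.2 hB)]
    simp only [Sum.inr.injEq]
    constructor
    · intro hx; exact absurd hx (by simp)
    · intro hr
      have h1 := (hT0 n).1.symm hr
      have h2 := ((hT0 n).2 _ _ ((coe_comp_inj b).not.2 hB)).1 h1
      exact absurd ((coe_comp_inj a).2 hA) h2
  · rw [lab_old hT0 s F b hB, lab_not_inj hT0 s F ((hsi a).not.2 hA)]
    constructor
    · intro hx; exact absurd hx (by simp)
    · intro hr
      have h2 := ((hT0 n).2 _ _ ((coe_comp_inj a).not.2 hA)).1 hr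
      exact absurd ((coe_comp_inj b).2 hB) h2
  · rw [lab_not_inj hT0 s F ((hsi a).not.2 hA), lab_not_inj hT0 s F ((hsi b).not.2 hB)]
    exact ⟨fun _ => ((hT0 n).2 _ _ ((coe_comp_inj a).not.2 hA)).2 ((coe_comp_inj b).not.2 hB),
      fun _ => rfl⟩

theorem BT0 : @IsT0Model (Option ↥(subOf s)) (BStr hT0 s F) := by
  letI := BStr hT0 s F
  intro n
  constructor
  · constructor
    · intro a; exact (eRelB_iff hT0 s F a a).2 rfl
    · intro a b hab
      exact (eRelB_iff hT0 s F b a).2 ((eRelB_iff hT0 s F a b).1 hab).symm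
    · intro a b c hab hbc
      exact (eRelB_iff hT0 s F a c).2
        (((eRelB_iff hT0 s F a b).1 hab).trans ((eRelB_iff hT0 s F b c).1 hbc))
  · intro a b ha
    rw [eRelB_iff hT0 s F a b, lab_not_inj hT0 s F ha]
    constructor
    · intro he hb
      exact lab_ne_rep hT0 s F hb he.symm
    · intro hb
      exact (lab_not_inj hT0 s F hb).symm

noncomputable def oldEmb :
    @Embedding LangE ↥(subOf s) (Option ↥(subOf s)) _ (BStr hT0 s F) := by
  letI := BStr hT0 s F
  refine ⟨⟨some, Option.some_injective _⟩, ?_, ?_⟩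
  · intro l f
    exact f.elim
  · intro l r x
    obtain ⟨n, rfl⟩ := r
    have hcast : ∀ j : Fin ((n+1)+(n+1)),
        Fin.cast (Eq.symm (rfl : (n+1)+(n+1) = (n+1)+(n+1))) j = j := fun j => by ext; simp
    show (lab hT0 s F n _ = lab hT0 s F n _) ↔ _
    have e1 : (fun i => (some ∘ x) (Fin.cast (Eq.symm rfl) (Fin.castAdd (n+1) i))) =
        (fun i => some (x (Fin.castAdd (n+1) i))) := by funext i; rw [hcast]; rfl
    have e2 : (fun i => (some ∘ x) (Fin.cast (Eq.symm rfl) (Fin.natAdd (n+1) i))) =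
        (fun i => some (x (Fin.natAdd (n+1) i))) := by funext i; rw [hcast]; rfl
    rw [e1, e2, lab_old_iff hT0 s F]
    show ERel n _ _ ↔ Structure.RelMap (L := LangE) _ (fun i => ((x i : ME)))
    unfold ERel
    have e3 : Fin.append (fun i => ((x (Fin.castAdd (n+1) i) : ME)))
        (fun i => ((x (Fin.natAdd (n+1) i) : ME))) = fun i => ((x i : ME)) :=
      Fin.append_castAdd_natAdd (f := fun i => ((x i : ME)))
    rw [e3]
    exact Iff.rfl

lemma lab_constrained (y : ↥(subOf s)) (u v : ME) (hF : F ↑y = some (u, v)) :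
    lab hT0 s F 1 ![none, some y] = Sum.inr (some (Quotient.mk (tSetoid hT0 1) ![u, v])) := by
  have hinj : Function.Injective (![none, some y] : Fin 2 → Option ↥(subOf s)) :=
    inj_pair (by simp)
  have hnot : ¬ ∀ i : Fin 2, ((![none, some y] : Fin 2 → Option ↥(subOf s)) i).isSome = true := by
    intro hall; simpa using hall 0
  have hbind : (((![none, some y] : Fin 2 → Option ↥(subOf s))) (Fin.last 1)).bind
      (fun w => F ↑w) = some (u, v) := by
    show (((![none, some y] : Fin 2 → Option ↥(subOf s))) 1).bind (fun w => F ↑w) = some (u, v)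
    simp [hF]
  have hc : (![none, some y] : Fin 2 → Option ↥(subOf s)) 0 = none ∧
      ∃ p : ME × ME, (((![none, some y] : Fin 2 → Option ↥(subOf s))) (Fin.last 1)).bind
        (fun w => F ↑w) = some p :=
    ⟨rfl, ⟨(u, v), hbind⟩⟩
  unfold lab
  rw [if_pos hinj, dif_neg hnot, dif_pos hc]
  have hch : hc.2.choose = (u, v) := by
    have h1 := hc.2.choose_spec
    exact (Option.some_injective _ (hbind.symm.trans h1)).symm
  rw [hch]
  have : (fun i : Fin 2 => if i = 0 then (u, v).1 else (u, v).2) = ![u, v] := by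
    funext i; fin_cases i <;> simp
  rw [this]

lemma lab_fresh (x : ↥(subOf s)) :
    lab hT0 s F 1 ![some x, none] = Sum.inl ![some x, none] := by
  have hinj : Function.Injective (![some x, none] : Fin 2 → Option ↥(subOf s)) :=
    inj_pair (by simp)
  have hnot : ¬ ∀ i : Fin 2, ((![some x, none] : Fin 2 → Option ↥(subOf s)) i).isSome = true := by
    intro hall; simpa using hall 1
  have hc : ¬ ((![some x, none] : Fin 2 → Option ↥(subOf s)) 0 = none ∧
      ∃ p : ME × ME, (((![some x, none] : Fin 2 → Option ↥(subOf s))) (Fin.last 1)).bind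
        (fun w => F ↑w) = some p) := by
    rintro ⟨h0, -⟩
    simp at h0
  unfold lab
  rw [if_pos hinj, dif_neg hnot, dif_neg hc]

end BConstruction

lemma key [Countable ME] (hT0 : IsT0Model ME) (h : IsFraisseLimit KE ME)
    (s : Set ME) (hs : s.Finite) (F : ME → Option (ME × ME)) :
    ∃ z : ME, z ∉ s ∧
      (∀ y u v, y ∈ s → u ∈ s → v ∈ s → u ≠ v → F y = some (u, v) → ERel 1 ![z, y] ![u, v]) ∧
      (∀ x u v, x ∈ s → u ∈ s → v ∈ s → ¬ ERel 1 ![x, z] ![u, v]) := by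
  letI := BStr hT0 s F
  haveI hfin : Finite ↥(subOf s) := hs.to_subtype
  have hfinB : Finite (Option ↥(subOf s)) :=
    Finite.of_equiv (↥(subOf s) ⊕ PUnit.{1}) (Equiv.optionEquivSumPUnit.{0,0} ↥(subOf s)).symm
  have hmem : (⟨Option ↥(subOf s), BStr hT0 s F⟩ : Bundled LangE.Structure) ∈ KE :=
    ⟨hfinB, BT0 hT0 s F⟩
  rw [← h.age] at hmem
  haveI hne : Nonempty (Option ↥(subOf s) ↪[LangE] ME) := hmem.2
  obtain ⟨f', hf'⟩ := h.ultrahomogeneous.extend_embedding (Structure.FG.of_finite)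
    (subOf s).subtype (oldEmb hT0 s F)
  have hcoe : ∀ a : ↥(subOf s), f' (some a) = ↑a := by
    intro a
    have := congrFun (congrArg (DFunLike.coe) hf') a
    have h2 : f' (oldEmb hT0 s F a) = ↑a := by simpa using this.symm
    exact h2
  refine ⟨f' none, ?_, ?_, ?_⟩
  · intro hz
    have h1 : f' (some ⟨f' none, hz⟩) = f' none := hcoe _
    have := f'.injective h1
    simp at this
  · intro y u v hy hu hv huv hF
    have h1 : (![f' none, y] : Fin 2 → ME) = ⇑f' ∘ ![none, some ⟨y, hy⟩] := by
      funext i; fin_cases i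
      · rfl
      · exact (hcoe ⟨y, hy⟩).symm
    have h2 : (![u, v] : Fin 2 → ME) = ⇑f' ∘ ![some ⟨u, hu⟩, some ⟨v, hv⟩] := by
      funext i; fin_cases i
      · exact (hcoe ⟨u, hu⟩).symm
      · exact (hcoe ⟨v, hv⟩).symm
    rw [h1, h2, eRel_map f', eRelB_iff hT0 s F]
    rw [lab_constrained hT0 s F ⟨y, hy⟩ u v hF]
    have h3 : (![some ⟨u, hu⟩, some ⟨v, hv⟩] : Fin 2 → Option ↥(subOf s)) =
        fun i => some ((![⟨u, hu⟩, ⟨v, hv⟩] : Fin 2 → ↥(subOf s)) i) := by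
      funext i; fin_cases i <;> rfl
    have h4 : Function.Injective (![⟨u, hu⟩, ⟨v, hv⟩] : Fin 2 → ↥(subOf s)) :=
      inj_pair (fun hc => huv (congrArg Subtype.val hc))
    rw [h3, lab_old hT0 s F _ h4]
    have h5 : (fun i => ((![⟨u, hu⟩, ⟨v, hv⟩] : Fin 2 → ↥(subOf s)) i : ME)) = ![u, v] := by
      funext i; fin_cases i <;> rfl
    rw [h5]
  · intro x u v hx hu hv hrel
    have h1 : (![x, f' none] : Fin 2 → ME) = ⇑f' ∘ ![some ⟨x, hx⟩, none] := by
      funext i; fin_cases i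
      · exact (hcoe ⟨x, hx⟩).symm
      · rfl
    have h2 : (![u, v] : Fin 2 → ME) = ⇑f' ∘ ![some ⟨u, hu⟩, some ⟨v, hv⟩] := by
      funext i; fin_cases i
      · exact (hcoe ⟨u, hu⟩).symm
      · exact (hcoe ⟨v, hv⟩).symm
    rw [h1, h2, eRel_map f', eRelB_iff hT0 s F] at hrel
    rw [lab_fresh hT0 s F ⟨x, hx⟩] at hrel
    have h3 : (![some ⟨u, hu⟩, some ⟨v, hv⟩] : Fin 2 → Option ↥(subOf s)) =
        fun i => some ((![⟨u, hu⟩, ⟨v, hv⟩] : Fin 2 → ↥(subOf s)) i) := by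
      funext i; fin_cases i <;> rfl
    rw [h3] at hrel
    by_cases h4 : Function.Injective (![⟨u, hu⟩, ⟨v, hv⟩] : Fin 2 → ↥(subOf s))
    · rw [lab_old hT0 s F _ h4] at hrel
      exact Sum.inl_ne_inr hrel
    · have hsi : ¬ Function.Injective (fun i => some ((![⟨u, hu⟩, ⟨v, hv⟩] : Fin 2 → ↥(subOf s)) i)) := by
        intro hcon
        exact h4 (fun i j hij => hcon (by simp [hij]))
      rw [lab_not_inj hT0 s F hsi] at hrel
      exact Sum.inl_ne_inr hrel


section Seq

variable [Countable ME] (hT0 : IsT0Model ME) (h : IsFraisseLimit KE ME)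

noncomputable def pre : ℕ → List ME
  | 0 => []
  | n+1 => pre n ++
      [(key hT0 h {x | x ∈ pre n} (List.finite_toSet _) (fun _ => none)).choose]

noncomputable def cseq (n : ℕ) : ME :=
  (key hT0 h {x | x ∈ pre hT0 h n} (List.finite_toSet _) (fun _ => none)).choose

lemma pre_succ (n : ℕ) : pre hT0 h (n+1) = pre hT0 h n ++ [cseq hT0 h n] := rfl

lemma cseq_not_mem (n : ℕ) : cseq hT0 h n ∉ pre hT0 h n :=
  (key hT0 h {x | x ∈ pre hT0 h n} (List.finite_toSet _) (fun _ => none)).choose_spec.1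

lemma cseq_fresh (n : ℕ) : ∀ x u v : ME, x ∈ pre hT0 h n → u ∈ pre hT0 h n →
    v ∈ pre hT0 h n → ¬ ERel 1 ![x, cseq hT0 h n] ![u, v] :=
  (key hT0 h {x | x ∈ pre hT0 h n} (List.finite_toSet _) (fun _ => none)).choose_spec.2.2

lemma mem_pre {m n : ℕ} (hmn : m < n) : cseq hT0 h m ∈ pre hT0 h n := by
  induction n with
  | zero => omega
  | succ k ih =>
    rw [pre_succ]
    rcases Nat.lt_succ_iff_lt_or_eq.1 hmn with h' | h'
    · exact List.mem_append_left _ (ih h')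
    · subst h'
      exact List.mem_append_right _ (List.mem_singleton_self _)

lemma cseq_inj : Function.Injective (cseq hT0 h) := by
  intro m n hmn
  by_contra hne
  rcases Nat.lt_or_ge m n with h' | h'
  · exact cseq_not_mem hT0 h n (hmn ▸ mem_pre hT0 h h')
  · have h'' : n < m := by omega
    exact cseq_not_mem hT0 h m (hmn ▸ mem_pre hT0 h h'')

lemma pair_ne' {k j : ℕ} (hkj : k < j) :
    ¬ ERel 1 ![cseq hT0 h (2*j), cseq hT0 h (2*j+1)]
      ![cseq hT0 h (2*k), cseq hT0 h (2*k+1)] :=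
  cseq_fresh hT0 h (2*j+1) _ _ _ (mem_pre hT0 h (by omega)) (mem_pre hT0 h (by omega))
    (mem_pre hT0 h (by omega))

lemma pair_ne {j k : ℕ} (hjk : j ≠ k) :
    ¬ ERel 1 ![cseq hT0 h (2*j), cseq hT0 h (2*j+1)]
      ![cseq hT0 h (2*k), cseq hT0 h (2*k+1)] := by
  rcases Nat.lt_or_ge k j with h' | h'
  · exact pair_ne' hT0 h h'
  · have hk : j < k := by omega
    intro hrel
    exact pair_ne' hT0 h hk ((hT0 1).1.symm hrel)

end Seq
end AuxTP2

/-- `T_E` has TP₂, witnessed by `φ(x; y, u, v) = E₂(xy, uv)`: there are a model `M`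
of `T_E` and triples `ā^i_j` such that each row `{φ(x, ā^i_j) : j < ω}` is 2-inconsistent while
every vertical path `{φ(x, ā^i_{η(i)}) : i < ω}` is (finitely) consistent. -/
theorem statement8 (ME : Type) [LangE.Structure ME] [Countable ME]
    (h : IsFraisseLimit KE ME) :
    ∃ (M : Type) (_ : LangE.Structure M), (LangE.completeTheory ME).Model M ∧
      ∃ a : ℕ → ℕ → M × M × M,
        (∀ (i : ℕ) (j k : ℕ), j ≠ k →
          ¬ ∃ x : M, ERel 1 ![x, (a i j).1] ![(a i j).2.1, (a i j).2.2] ∧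
            ERel 1 ![x, (a i k).1] ![(a i k).2.1, (a i k).2.2]) ∧
        (∀ (η : ℕ → ℕ) (m : ℕ), ∃ x : M, ∀ i < m,
          ERel 1 ![x, (a i (η i)).1] ![(a i (η i)).2.1, (a i (η i)).2.2]) := by
  classical
  have hT0 : IsT0Model ME := hT0_of_limit h
  refine ⟨ME, inferInstance, inferInstance,
    fun i j => (cseq hT0 h (2*i), cseq hT0 h (2*j), cseq hT0 h (2*j+1)), ?_, ?_⟩
  · rintro i j k hjk ⟨x, h1, h2⟩
    exact pair_ne hT0 h hjk ((hT0 1).1.trans ((hT0 1).1.symm h1) h2)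
  · intro η m
    set N : ℕ := 2*m + 2*((Finset.range m).sup η) + 2 with hN
    obtain ⟨z, -, hcons, -⟩ := key hT0 h (cseq hT0 h '' (Set.Iio N))
      (Set.Finite.image _ (Set.finite_Iio N))
      (fun w => if hw : ∃ i', i' < m ∧ w = cseq hT0 h (2*i') then
        some (cseq hT0 h (2*η hw.choose), cseq hT0 h (2*η hw.choose + 1)) else none)
    refine ⟨z, fun i hi => ?_⟩
    have hη : η i ≤ (Finset.range m).sup η := Finset.le_sup (Finset.mem_range.2 hi)
    have hw : ∃ i', i' < m ∧ cseq hT0 h (2*i) = cseq hT0 h (2*i') := ⟨i, hi, rfl⟩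
    have hch : hw.choose = i := by
      have h1 := hw.choose_spec
      have h2 := cseq_inj hT0 h h1.2
      omega
    refine hcons (cseq hT0 h (2*i)) (cseq hT0 h (2*η i)) (cseq hT0 h (2*η i + 1))
      ⟨2*i, by simp; omega, rfl⟩ ⟨2*η i, by simp; omega, rfl⟩ ⟨2*η i + 1, by simp; omega, rfl⟩
      ((cseq_inj hT0 h).ne (by omega)) ?_
    rw [dif_pos hw, hch]
end

section
/- (Adler) Let T be a complete first-order theory in any language and φ(x̄, ȳ) a formula. Then φ has SOP2 in T if and only if φ has TP1 in T. Here φ has SOP2 in T if there exist a model M of T and a family (ā_η)_{η ∈ 2^{<ω}} of ȳ-tuples in M such that for every η ∈ 2^ω and every m < ω, M satisfies ∃x̄ ⋀_{n<m} φ(x̄, ā_{η↾n}), and for all incomparable η, ν ∈ 2^{<ω}, M satisfies ¬∃x̄ (φ(x̄, ā_η) ∧ φ(x̄, ā_ν)); and φ has TP1 in T if the same holds with the binary tree 2^{<ω} replaced by the finitely branching tree ω^{<ω} (and branches η ∈ ω^ω). -/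
open FirstOrder Language

universe u v w

namespace Statement10Aux

/-- Encode a finite sequence of naturals as a binary sequence, `n ↦ 0^n 1` blockwise. -/
def code : List ℕ → List Bool
  | [] => []
  | n :: s => List.replicate n false ++ true :: code s

lemma code_append (s t : List ℕ) : code (s ++ t) = code s ++ code t := by
  induction s with
  | nil => rfl
  | cons n s ih => simp [code, ih]

lemma length_le_length_code (s : List ℕ) : s.length ≤ (code s).length := by
  induction s with
  | nil => simp [code]
  | cons n s ih => simp only [code, List.length_append, List.length_replicate, List.length_cons]; omega

lemma code_prefix_of_prefix {s t : List ℕ} (h : s <+: t) : code s <+: code t := by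
  obtain ⟨u, rfl⟩ := h
  rw [code_append]
  exact List.prefix_append _ _

lemma prefix_of_code_prefix : ∀ s t : List ℕ, code s <+: code t → s <+: t := by
  intro s
  induction s with
  | nil => intro t _; exact List.nil_prefix
  | cons m s ih =>
    intro t h
    cases t with
    | nil =>
      exfalso
      have := h.length_le
      simp only [code, List.length_append, List.length_replicate, List.length_cons,
        List.length_nil] at this
      omega
    | cons n t =>
      have hmn : m = n := by
        by_contra hne
        rcases Nat.lt_or_ge m n with hlt | hge
        · have hlen : m < (code (m :: s)).length := by
            simp only [code, List.length_append, List.length_replicate, List.length_cons]; omega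
          have := h.getElem hlen
          have hL : (code (m :: s))[m]'hlen = true := by
            simp only [code]
            rw [List.getElem_append_right (by simp)]
            simp
          have hR : (code (n :: t))[m]'(Nat.le_trans hlen h.length_le) = false := by
            simp only [code]
            rw [List.getElem_append_left (by simp; omega)]
            simp
          rw [hL, hR] at this
          simp at this
        · have hlt : n < m := by omega
          have hlen : n < (code (m :: s)).length := by
            simp only [code, List.length_append, List.length_replicate, List.length_cons]; omega
          have := h.getElem hlen
          have hL : (code (m :: s))[n]'hlen = false := by
            simp only [code]
            rw [List.getElem_append_left (by simp; omega)]
            simp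
          have hR : (code (n :: t))[n]'(Nat.le_trans hlen h.length_le) = true := by
            simp only [code]
            rw [List.getElem_append_right (by simp)]
            simp
          rw [hL, hR] at this
          simp at this
      subst hmn
      simp only [code] at h
      rw [List.prefix_append_right_inj, List.cons_prefix_cons] at h
      rw [List.cons_prefix_cons]
      exact ⟨rfl, ih t h.2⟩

/-- `η↾n`. -/
def res {α : Type*} (η : ℕ → α) (n : ℕ) : List α := List.ofFn (fun i : Fin n => η i)

lemma res_prefix_res {α : Type*} (η : ℕ → α) {n m : ℕ} (h : n ≤ m) :
    res η n <+: res η m := by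
  rw [List.prefix_iff_eq_take]
  apply List.ext_getElem
  · simp [res]; omega
  · intro i h1 h2
    simp [res]

lemma length_res {α : Type*} (η : ℕ → α) (n : ℕ) : (res η n).length = n := by
  simp [res]

lemma code_res_length_lt (η : ℕ → ℕ) {n m : ℕ} (h : n < m) :
    (code (res η n)).length < (code (res η m)).length := by
  obtain ⟨u, hu⟩ := res_prefix_res η h.le
  have hul : 0 < u.length := by
    have := congrArg List.length hu
    simp [length_res] at this
    omega
  have := congrArg List.length (congrArg code hu.symm)
  rw [code_append, List.length_append] at this
  have := length_le_length_code u
  omega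

/-- The infinite binary branch obtained as the limit of the codes of `η↾n`. -/
def θfun (η : ℕ → ℕ) (j : ℕ) : Bool := (code (res η (j + 1))).getD j false

lemma res_θfun (η : ℕ → ℕ) (n : ℕ) :
    res (θfun η) ((code (res η n)).length) = code (res η n) := by
  apply List.ext_getElem
  · simp [length_res]
  · intro j h1 h2
    rw [length_res] at h1
    simp only [res, List.getElem_ofFn]
    show θfun η j = _
    unfold θfun
    have hj1 : j < (code (res η (j + 1))).length := by
      have := length_le_length_code (res η (j + 1))
      rw [length_res] at this
      omega
    rw [List.getD_eq_getElem _ _ hj1]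
    rcases Nat.le_total (j + 1) n with hle | hle
    · have hpre : code (res η (j + 1)) <+: code (res η n) :=
        code_prefix_of_prefix (res_prefix_res η hle)
      exact hpre.getElem hj1
    · have hpre : code (res η n) <+: code (res η (j + 1)) :=
        code_prefix_of_prefix (res_prefix_res η hle)
      exact (hpre.getElem h2).symm

/-- Embed binary sequences into `ω`-sequences. -/
def emb (t : List Bool) : List ℕ := t.map (fun b => if b then 1 else 0)

lemma emb_prefix_iff {s t : List Bool} : emb s <+: emb t ↔ s <+: t := by
  constructor
  · intro h
    rw [List.prefix_iff_eq_take] at h ⊢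
    have hinj : Function.Injective (fun b : Bool => if b then 1 else 0 : Bool → ℕ) := by
      intro a b hab
      cases a <;> cases b <;> simp_all
    have hlen : (emb s).length = s.length := by simp [emb]
    rw [hlen] at h
    simp only [emb] at h
    rw [← List.map_take] at h
    exact List.map_injective_iff.mpr hinj h
  · intro h
    obtain ⟨u, rfl⟩ := h
    simp only [emb, List.map_append]
    exact List.prefix_append _ _

end Statement10Aux

open Statement10Aux

/-- Adler: for a complete theory `T` and a formula `φ(x̄, ȳ)`, `φ` has SOP₂ in
`T` (witnessed by a binary tree indexed by `2^{<ω}`, i.e. `List Bool`) if and only if `φ` has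
TP₁ in `T` (the same with the tree `ω^{<ω}`, i.e. `List ℕ`). -/
theorem statement10 (L : FirstOrder.Language.{u, v}) (T : L.Theory) (hT : T.IsComplete)
    (k l : ℕ) (φ : L.Formula (Fin k ⊕ Fin l)) :
    (∃ (M : Type w) (_ : L.Structure M) (_ : T.Model M) (a : List Bool → (Fin l → M)),
      (∀ (η : ℕ → Bool) (m : ℕ), ∃ x : Fin k → M, ∀ n < m,
        φ.Realize (Sum.elim x (a (List.ofFn (fun i : Fin n => η i))))) ∧
      (∀ η ν : List Bool, ¬ η <+: ν → ¬ ν <+: η →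
        ¬ ∃ x : Fin k → M, φ.Realize (Sum.elim x (a η)) ∧ φ.Realize (Sum.elim x (a ν)))) ↔
    (∃ (M : Type w) (_ : L.Structure M) (_ : T.Model M) (a : List ℕ → (Fin l → M)),
      (∀ (η : ℕ → ℕ) (m : ℕ), ∃ x : Fin k → M, ∀ n < m,
        φ.Realize (Sum.elim x (a (List.ofFn (fun i : Fin n => η i))))) ∧
      (∀ η ν : List ℕ, ¬ η <+: ν → ¬ ν <+: η →
        ¬ ∃ x : Fin k → M, φ.Realize (Sum.elim x (a η)) ∧ φ.Realize (Sum.elim x (a ν)))) := by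
  constructor
  · rintro ⟨M, S, hM, a, hpath, hinc⟩
    refine ⟨M, S, hM, fun s => a (code s), ?_, ?_⟩
    · intro η m
      obtain ⟨x, hx⟩ := hpath (θfun η) ((code (res η m)).length)
      refine ⟨x, fun n hn => ?_⟩
      have hlt := code_res_length_lt η hn
      have := hx ((code (res η n)).length) hlt
      have hkey : (List.ofFn fun i : Fin ((code (res η n)).length) => θfun η i)
          = code (res η n) := res_θfun η n
      rw [hkey] at this
      exact this
    · intro η ν h1 h2
      exact hinc (code η) (code ν) (fun h => h1 (prefix_of_code_prefix _ _ h))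
        (fun h => h2 (prefix_of_code_prefix _ _ h))
  · rintro ⟨M, S, hM, a, hpath, hinc⟩
    refine ⟨M, S, hM, fun t => a (emb t), ?_, ?_⟩
    · intro η m
      obtain ⟨x, hx⟩ := hpath (fun n => if η n then 1 else 0) m
      refine ⟨x, fun n hn => ?_⟩
      have := hx n hn
      have hkey : emb (List.ofFn fun i : Fin n => η i)
          = List.ofFn (fun i : Fin n => if η i then 1 else 0) := by
        simp [emb, List.map_ofFn]; rfl
      rw [← hkey] at this
      exact this
    · intro η ν h1 h2
      exact hinc (emb η) (emb ν) (fun h => h1 (emb_prefix_iff.mp h))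
        (fun h => h2 (emb_prefix_iff.mp h))
end

section
/- The class of all L_E-structures satisfying T⁰_E (not only the finite ones) has the amalgamation property and the joint embedding property with respect to L_E-embeddings: any two such structures embed into a common one, and for any structures A, B, C satisfying T⁰_E with embeddings f : A → B and g : A → C there are a structure D satisfying T⁰_E and embeddings f′ : B → D, g′ : C → D with f′ ∘ f = g′ ∘ g. -/
open FirstOrder Language CategoryTheory

universe u

/-! ### Auxiliary material for the proof -/

namespace Statement12Aux

lemma comp_append {M N : Type*} (e : M → N) {m k : ℕ} (a : Fin m → M) (b : Fin k → M) :
    e ∘ Fin.append a b = Fin.append (e ∘ a) (e ∘ b) := by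
  funext i
  induction i using Fin.addCases with
  | left i => simp [Fin.append_left]
  | right i => simp [Fin.append_right]

lemma erel_map {M N : Type*} [LangE.Structure M] [LangE.Structure N] (e : M ↪[LangE] N)
    {n : ℕ} (x y : Fin (n + 1) → M) : ERel n (⇑e ∘ x) (⇑e ∘ y) ↔ ERel n x y := by
  rw [ERel, ERel, ← comp_append, e.map_rel]

lemma ninj_comp {M N : Type*} {e : M → N} (he : Function.Injective e) {k : ℕ}
    {x : Fin k → M} : ¬ Function.Injective (e ∘ x) ↔ ¬ Function.Injective x := by
  constructor
  · intro h hx; exact h (he.comp hx)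
  · intro h hc; exact h fun i j hij => hc (congrArg e hij)

lemma ninj_rel {M : Type*} [LangE.Structure M] (hM : IsT0Model M) {n : ℕ}
    {x y : Fin (n + 1) → M} (h : ERel n x y) :
    ¬ Function.Injective x ↔ ¬ Function.Injective y := by
  constructor
  · intro hx; exact ((hM n).2 x y hx).mp h
  · intro hy; exact ((hM n).2 y x hy).mp ((hM n).1.symm h)

lemma comp_cancel {M N : Type*} {e : M → N} (he : Function.Injective e) {k : ℕ}
    {u v : Fin k → M} (h : e ∘ u = e ∘ v) : u = v :=
  funext fun i => he (congrFun h i)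

lemma append_eta {M : Type*} {m k : ℕ} (v : Fin (m + k) → M) :
    Fin.append (fun i => v (Fin.castAdd k i)) (fun i => v (Fin.natAdd m i)) = v := by
  funext i
  induction i using Fin.addCases with
  | left i => simp [Fin.append_left]
  | right i => simp [Fin.append_right]

lemma relMap_iff {M : Type*} [LangE.Structure M] {l : ℕ} (r : LangE.Relations l)
    (v : Fin l → M) :
    Structure.RelMap r v ↔
      ERel r.1 (fun i => v (Fin.cast r.2.symm (Fin.castAdd _ i)))
        (fun i => v (Fin.cast r.2.symm (Fin.natAdd _ i))) := by
  obtain ⟨m, rfl⟩ := r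
  simp only [Fin.cast_refl, id]
  rw [ERel]
  rw [show (Fin.append (fun i => v (Fin.castAdd (m + 1) i))
      (fun i => v (Fin.natAdd (m + 1) i))) = v from append_eta v]
  rfl

section Amalgam

variable {A B C : Type u} [LangE.Structure A] [LangE.Structure B] [LangE.Structure C]
variable (f : A ↪[LangE] B) (g : A ↪[LangE] C)

/-- The map from `C` into the amalgam `B ⊕ (C ∖ g(A))`. -/
noncomputable def kf (c : C) : B ⊕ {c : C // c ∉ Set.range ⇑g} :=
  @dite _ (c ∈ Set.range ⇑g) (Classical.dec _)
    (fun h => Sum.inl (f h.choose)) (fun h => Sum.inr ⟨c, h⟩)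

lemma kf_g (a : A) : kf f g (g a) = Sum.inl (f a) := by
  have h : g a ∈ Set.range ⇑g := ⟨a, rfl⟩
  unfold kf
  rw [dif_pos h]
  exact congrArg Sum.inl (congrArg f (g.injective h.choose_spec))

lemma kf_inj : Function.Injective (kf f g) := by
  intro c c' h
  unfold kf at h
  by_cases h1 : c ∈ Set.range ⇑g <;> by_cases h2 : c' ∈ Set.range ⇑g
  · rw [dif_pos h1, dif_pos h2] at h
    rw [← h1.choose_spec, ← h2.choose_spec, f.injective (Sum.inl.inj h)]
  · rw [dif_pos h1, dif_neg h2] at h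
    exact absurd h (by simp)
  · rw [dif_neg h1, dif_pos h2] at h
    exact absurd h (by simp)
  · rw [dif_neg h1, dif_neg h2] at h
    exact congrArg Subtype.val (Sum.inr.inj h)

lemma inl_eq_kf {b : B} {c : C} (h : Sum.inl b = kf f g c) : ∃ a, b = f a ∧ c = g a := by
  unfold kf at h
  by_cases h1 : c ∈ Set.range ⇑g
  · rw [dif_pos h1] at h
    exact ⟨h1.choose, Sum.inl.inj h, h1.choose_spec.symm⟩
  · rw [dif_neg h1] at h
    simp at h

lemma inl_eq_kf_tuple {k : ℕ} {x : Fin k → B} {y : Fin k → C}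
    (h : (Sum.inl ∘ x : Fin k → B ⊕ {c : C // c ∉ Set.range ⇑g}) = kf f g ∘ y) :
    ∃ a : Fin k → A, x = ⇑f ∘ a ∧ y = ⇑g ∘ a := by
  choose a ha1 ha2 using fun i => inl_eq_kf f g (congrFun h i)
  exact ⟨a, funext ha1, funext ha2⟩

/-- transfer of the relation between the two copies of `A`. -/
lemma erel_fg {n : ℕ} (a a' : Fin (n + 1) → A) :
    ERel n (⇑f ∘ a) (⇑f ∘ a') ↔ ERel n (⇑g ∘ a) (⇑g ∘ a') := by
  rw [erel_map, erel_map]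

/-- The equivalence relation on `(n+1)`-tuples of the amalgam. -/
@[reducible] def EquivD (n : ℕ) (x y : Fin (n + 1) → B ⊕ {c : C // c ∉ Set.range ⇑g}) : Prop :=
  (¬ Function.Injective x ∧ ¬ Function.Injective y) ∨ x = y ∨
  (∃ x' y', x = Sum.inl ∘ x' ∧ y = Sum.inl ∘ y' ∧ ERel n x' y') ∨
  (∃ x' y', x = kf f g ∘ x' ∧ y = kf f g ∘ y' ∧ ERel n x' y') ∨
  (∃ x' y', ∃ a : Fin (n + 1) → A, x = Sum.inl ∘ x' ∧ y = kf f g ∘ y' ∧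
      ERel n x' (⇑f ∘ a) ∧ ERel n (⇑g ∘ a) y') ∨
  (∃ x' y', ∃ a : Fin (n + 1) → A, y = Sum.inl ∘ y' ∧ x = kf f g ∘ x' ∧
      ERel n y' (⇑f ∘ a) ∧ ERel n (⇑g ∘ a) x')

lemma equivD_ninj (hB : IsT0Model B) (hC : IsT0Model C) {n : ℕ} {x y : Fin (n + 1) → B ⊕ {c : C // c ∉ Set.range ⇑g}}
    (h : EquivD f g n x y) :
    ¬ Function.Injective x ↔ ¬ Function.Injective y := by
  rcases h with ⟨hx, hy⟩ | rfl | ⟨x', y', rfl, rfl, h⟩ | ⟨x', y', rfl, rfl, h⟩ |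
    ⟨x', y', a, rfl, rfl, h1, h2⟩ | ⟨x', y', a, rfl, rfl, h1, h2⟩
  · simp [hx, hy]
  · exact Iff.rfl
  · exact (ninj_comp Sum.inl_injective).trans ((ninj_rel hB h).trans
      (ninj_comp Sum.inl_injective).symm)
  · exact (ninj_comp (kf_inj f g)).trans ((ninj_rel hC h).trans (ninj_comp (kf_inj f g)).symm)
  · exact (ninj_comp Sum.inl_injective).trans ((ninj_rel hB h1).trans
      (((ninj_comp f.injective).trans (ninj_comp g.injective).symm).trans
        ((ninj_rel hC h2).trans (ninj_comp (kf_inj f g)).symm)))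
  · exact ((ninj_comp (kf_inj f g)).trans (((ninj_rel hC h2).symm.trans
      ((ninj_comp g.injective).trans (ninj_comp f.injective).symm)).trans
        ((ninj_rel hB h1).symm.trans (ninj_comp Sum.inl_injective).symm)))

lemma equivD_refl {n : ℕ} (x : Fin (n + 1) → B ⊕ {c : C // c ∉ Set.range ⇑g}) :
    EquivD f g n x x := Or.inr (Or.inl rfl)

lemma equivD_symm (hB : IsT0Model B) (hC : IsT0Model C) {n : ℕ} {x y : Fin (n + 1) → B ⊕ {c : C // c ∉ Set.range ⇑g}}
    (h : EquivD f g n x y) : EquivD f g n y x := by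
  rcases h with ⟨hx, hy⟩ | rfl | ⟨x', y', hx, hy, h⟩ | ⟨x', y', hx, hy, h⟩ |
    ⟨x', y', a, hx, hy, h1, h2⟩ | ⟨x', y', a, hy, hx, h1, h2⟩
  · exact Or.inl ⟨hy, hx⟩
  · exact Or.inr (Or.inl rfl)
  · exact Or.inr (Or.inr (Or.inl ⟨y', x', hy, hx, (hB n).1.symm h⟩))
  · exact Or.inr (Or.inr (Or.inr (Or.inl ⟨y', x', hy, hx, (hC n).1.symm h⟩)))
  · exact Or.inr (Or.inr (Or.inr (Or.inr (Or.inr ⟨y', x', a, hx, hy, h1, h2⟩))))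
  · exact Or.inr (Or.inr (Or.inr (Or.inr (Or.inl ⟨y', x', a, hy, hx, h1, h2⟩))))

lemma equivD_trans (hB : IsT0Model B) (hC : IsT0Model C) {n : ℕ}
    {x y z : Fin (n + 1) → B ⊕ {c : C // c ∉ Set.range ⇑g}}
    (hxy : EquivD f g n x y) (hyz : EquivD f g n y z) : EquivD f g n x z := by
  by_cases hy : Function.Injective y
  case neg =>
    exact Or.inl ⟨(equivD_ninj f g hB hC hxy).mpr hy, (equivD_ninj f g hB hC hyz).mp hy⟩
  case pos =>
  have trB : ∀ {u v w : Fin (n + 1) → B}, ERel n u v → ERel n v w → ERel n u w :=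
    fun h h' => (hB n).1.trans h h'
  have syB : ∀ {u v : Fin (n + 1) → B}, ERel n u v → ERel n v u :=
    fun h => (hB n).1.symm h
  have trC : ∀ {u v w : Fin (n + 1) → C}, ERel n u v → ERel n v w → ERel n u w :=
    fun h h' => (hC n).1.trans h h'
  have syC : ∀ {u v : Fin (n + 1) → C}, ERel n u v → ERel n v u :=
    fun h => (hC n).1.symm h
  rcases hxy with ⟨hx1, hy1⟩ | rfl | ⟨x', y1, hx, hy1, hb⟩ | ⟨x', y1, hx, hy1, hc⟩ |
    ⟨x', y1, a, hx, hy1, h1, h2⟩ | ⟨x', y1, a, hy1, hx, h1, h2⟩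
  · exact absurd hy1 (not_not.mpr hy)
  · exact hyz
  -- hxy = PB : x = inl ∘ x', y = inl ∘ y1, hb : ERel x' y1
  · rcases hyz with ⟨hy2, hz2⟩ | rfl | ⟨y2, z', hy2, hz, h'⟩ | ⟨y2, z', hy2, hz, h'⟩ |
      ⟨y2, z', a2, hy2, hz, h1', h2'⟩ | ⟨y2, z', a2, hz, hy2, h1', h2'⟩
    · exact absurd hy2 (not_not.mpr hy)
    · exact Or.inr (Or.inr (Or.inl ⟨x', y1, hx, hy1, hb⟩))
    · -- PB ∘ PB
      have : y1 = y2 := comp_cancel Sum.inl_injective (hy1.symm.trans hy2)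
      subst this
      exact Or.inr (Or.inr (Or.inl ⟨x', z', hx, hz, trB hb h'⟩))
    · -- PB ∘ PC
      obtain ⟨a, ha1, ha2⟩ := inl_eq_kf_tuple f g (hy1.symm.trans hy2)
      subst ha1; subst ha2
      exact Or.inr (Or.inr (Or.inr (Or.inr (Or.inl ⟨x', z', a, hx, hz, hb, h'⟩))))
    · -- PB ∘ PX
      have : y1 = y2 := comp_cancel Sum.inl_injective (hy1.symm.trans hy2)
      subst this
      exact Or.inr (Or.inr (Or.inr (Or.inr (Or.inl ⟨x', z', a2, hx, hz, trB hb h1', h2'⟩))))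
    · -- PB ∘ PY
      obtain ⟨a, ha1, ha2⟩ := inl_eq_kf_tuple f g (hy1.symm.trans hy2)
      subst ha1; subst ha2
      -- h1' : ERel z' (f∘a2), h2' : ERel (g∘a2) (g∘a)
      have h3 : ERel n (⇑f ∘ a2) (⇑f ∘ a) := (erel_fg f g _ _).mpr h2'
      exact Or.inr (Or.inr (Or.inl ⟨x', z', hx, hz, trB hb (syB (trB h1' h3))⟩))
  -- hxy = PC : x = kf ∘ x', y = kf ∘ y1, hc : ERel x' y1
  · rcases hyz with ⟨hy2, hz2⟩ | rfl | ⟨y2, z', hy2, hz, h'⟩ | ⟨y2, z', hy2, hz, h'⟩ |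
      ⟨y2, z', a2, hy2, hz, h1', h2'⟩ | ⟨y2, z', a2, hz, hy2, h1', h2'⟩
    · exact absurd hy2 (not_not.mpr hy)
    · exact Or.inr (Or.inr (Or.inr (Or.inl ⟨x', y1, hx, hy1, hc⟩)))
    · -- PC ∘ PB
      obtain ⟨a, ha1, ha2⟩ := inl_eq_kf_tuple f g (hy2.symm.trans hy1)
      subst ha1; subst ha2
      exact Or.inr (Or.inr (Or.inr (Or.inr (Or.inr
        ⟨x', z', a, hz, hx, syB h', syC hc⟩))))
    · -- PC ∘ PC
      have : y1 = y2 := comp_cancel (kf_inj f g) (hy1.symm.trans hy2)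
      subst this
      exact Or.inr (Or.inr (Or.inr (Or.inl ⟨x', z', hx, hz, trC hc h'⟩)))
    · -- PC ∘ PX : y = kf ∘ y1 = inl ∘ y2
      obtain ⟨a, ha1, ha2⟩ := inl_eq_kf_tuple f g (hy2.symm.trans hy1)
      subst ha1; subst ha2
      -- h1' : ERel (f∘a) (f∘a2), h2' : ERel (g∘a2) z'
      have h3 : ERel n (⇑g ∘ a) (⇑g ∘ a2) := (erel_fg f g _ _).mp h1'
      exact Or.inr (Or.inr (Or.inr (Or.inl ⟨x', z', hx, hz, trC hc (trC h3 h2')⟩)))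
    · -- PC ∘ PY : z = inl ∘ z', y = kf ∘ y2
      have : y1 = y2 := comp_cancel (kf_inj f g) (hy1.symm.trans hy2)
      subst this
      exact Or.inr (Or.inr (Or.inr (Or.inr (Or.inr
        ⟨x', z', a2, hz, hx, h1', trC h2' (syC hc)⟩))))
  -- hxy = PX : x = inl ∘ x', y = kf ∘ y1, h1 : ERel x' (f∘a), h2 : ERel (g∘a) y1
  · rcases hyz with ⟨hy2, hz2⟩ | rfl | ⟨y2, z', hy2, hz, h'⟩ | ⟨y2, z', hy2, hz, h'⟩ |
      ⟨y2, z', a2, hy2, hz, h1', h2'⟩ | ⟨y2, z', a2, hz, hy2, h1', h2'⟩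
    · exact absurd hy2 (not_not.mpr hy)
    · exact Or.inr (Or.inr (Or.inr (Or.inr (Or.inl ⟨x', y1, a, hx, hy1, h1, h2⟩))))
    · -- PX ∘ PB : y = kf ∘ y1 = inl ∘ y2
      obtain ⟨a3, ha1, ha2⟩ := inl_eq_kf_tuple f g (hy2.symm.trans hy1)
      subst ha1; subst ha2
      -- h2 : ERel (g∘a) (g∘a3), h' : ERel (f∘a3) z'
      have h3 : ERel n (⇑f ∘ a) (⇑f ∘ a3) := (erel_fg f g _ _).mpr h2
      exact Or.inr (Or.inr (Or.inl ⟨x', z', hx, hz, trB h1 (trB h3 h')⟩))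
    · -- PX ∘ PC
      have : y1 = y2 := comp_cancel (kf_inj f g) (hy1.symm.trans hy2)
      subst this
      exact Or.inr (Or.inr (Or.inr (Or.inr (Or.inl ⟨x', z', a, hx, hz, h1, trC h2 h'⟩))))
    · -- PX ∘ PX : y = kf ∘ y1 = inl ∘ y2
      obtain ⟨a3, ha1, ha2⟩ := inl_eq_kf_tuple f g (hy2.symm.trans hy1)
      subst ha1; subst ha2
      -- h2 : ERel (g∘a)(g∘a3); h1' : ERel (f∘a3)(f∘a2); h2' : ERel (g∘a2) z'
      have h3 : ERel n (⇑f ∘ a) (⇑f ∘ a3) := (erel_fg f g _ _).mpr h2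
      exact Or.inr (Or.inr (Or.inr (Or.inr (Or.inl
        ⟨x', z', a2, hx, hz, trB h1 (trB h3 h1'), h2'⟩))))
    · -- PX ∘ PY : y = kf ∘ y1 = kf ∘ y2, z = inl ∘ z'
      have : y1 = y2 := comp_cancel (kf_inj f g) (hy1.symm.trans hy2)
      subst this
      -- h2 : ERel (g∘a) y1, h1' : ERel z' (f∘a2), h2' : ERel (g∘a2) y1
      have h3 : ERel n (⇑g ∘ a) (⇑g ∘ a2) := trC h2 (syC h2')
      have h4 : ERel n (⇑f ∘ a) (⇑f ∘ a2) := (erel_fg f g _ _).mpr h3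
      exact Or.inr (Or.inr (Or.inl ⟨x', z', hx, hz, trB h1 (trB h4 (syB h1'))⟩))
  -- hxy = PY : y = inl ∘ y1, x = kf ∘ x', h1 : ERel y1 (f∘a), h2 : ERel (g∘a) x'
  · rcases hyz with ⟨hy2, hz2⟩ | rfl | ⟨y2, z', hy2, hz, h'⟩ | ⟨y2, z', hy2, hz, h'⟩ |
      ⟨y2, z', a2, hy2, hz, h1', h2'⟩ | ⟨y2, z', a2, hz, hy2, h1', h2'⟩
    · exact absurd hy2 (not_not.mpr hy)
    · exact Or.inr (Or.inr (Or.inr (Or.inr (Or.inr ⟨x', y1, a, hy1, hx, h1, h2⟩))))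
    · -- PY ∘ PB : y = inl∘y1 = inl∘y2
      have : y1 = y2 := comp_cancel Sum.inl_injective (hy1.symm.trans hy2)
      subst this
      exact Or.inr (Or.inr (Or.inr (Or.inr (Or.inr
        ⟨x', z', a, hz, hx, trB (syB h') (h1), h2⟩))))
    · -- PY ∘ PC : y = inl∘y1 = kf∘y2
      obtain ⟨a3, ha1, ha2⟩ := inl_eq_kf_tuple f g (hy1.symm.trans hy2)
      subst ha1; subst ha2
      -- h1 : ERel (f∘a3)(f∘a), h2 : ERel (g∘a) x', h' : ERel (g∘a3) z'
      have h3 : ERel n (⇑g ∘ a3) (⇑g ∘ a) := (erel_fg f g _ _).mp h1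
      exact Or.inr (Or.inr (Or.inr (Or.inl
        ⟨x', z', hx, hz, trC (syC h2) (trC (syC h3) h')⟩)))
    · -- PY ∘ PX : y = inl∘y1 = inl∘y2
      have : y1 = y2 := comp_cancel Sum.inl_injective (hy1.symm.trans hy2)
      subst this
      -- h1 : ERel y1 (f∘a), h1' : ERel y1 (f∘a2), h2' : ERel (g∘a2) z'
      have h3 : ERel n (⇑f ∘ a) (⇑f ∘ a2) := trB (syB h1) h1'
      have h4 : ERel n (⇑g ∘ a) (⇑g ∘ a2) := (erel_fg f g _ _).mp h3
      exact Or.inr (Or.inr (Or.inr (Or.inl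
        ⟨x', z', hx, hz, trC (syC h2) (trC h4 h2')⟩)))
    · -- PY ∘ PY : y = inl∘y1, z = inl∘z', y = kf∘y2
      obtain ⟨a3, ha1, ha2⟩ := inl_eq_kf_tuple f g (hy1.symm.trans hy2)
      subst ha1; subst ha2
      -- h1 : ERel (f∘a3)(f∘a), h2 : ERel (g∘a) x', h1' : ERel z' (f∘a2), h2' : ERel (g∘a2)(g∘a3)
      have h3 : ERel n (⇑f ∘ a2) (⇑f ∘ a3) := (erel_fg f g _ _).mpr h2'
      have h4 : ERel n z' (⇑f ∘ a) := trB h1' (trB h3 h1)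
      exact Or.inr (Or.inr (Or.inr (Or.inr (Or.inr ⟨x', z', a, hz, hx, h4, h2⟩))))

/-- The `L_E`-structure on the amalgam. -/
noncomputable def structD : LangE.Structure (B ⊕ {c : C // c ∉ Set.range ⇑g}) where
  funMap := fun F _ => F.elim
  RelMap := fun r v =>
    EquivD f g r.1 (fun i => v (Fin.cast r.2.symm (Fin.castAdd _ i)))
      (fun i => v (Fin.cast r.2.symm (Fin.natAdd _ i)))

lemma erelD_iff {n : ℕ} (x y : Fin (n + 1) → B ⊕ {c : C // c ∉ Set.range ⇑g}) :
    @ERel (B ⊕ {c : C // c ∉ Set.range ⇑g}) (structD f g) n x y ↔ EquivD f g n x y := by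
  letI := structD f g
  have h1 : (fun i => Fin.append x y (Fin.cast (ESym n).2.symm (Fin.castAdd (n + 1) i))) = x := by
    funext i
    exact Fin.append_left x y i
  have h2 : (fun i => Fin.append x y (Fin.cast (ESym n).2.symm (Fin.natAdd (n + 1) i))) = y := by
    funext i
    exact Fin.append_right x y i
  exact (congrArg₂ (EquivD f g n) h1 h2).to_iff

lemma isT0_D (hB : IsT0Model B) (hC : IsT0Model C) : @IsT0Model (B ⊕ {c : C // c ∉ Set.range ⇑g}) (structD f g) := by
  letI := structD f g
  intro n
  constructor
  · exact ⟨fun x => (erelD_iff f g x x).mpr (equivD_refl f g x),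
      fun h => (erelD_iff f g _ _).mpr (equivD_symm f g hB hC ((erelD_iff f g _ _).mp h)),
      fun h h' => (erelD_iff f g _ _).mpr
        (equivD_trans f g hB hC ((erelD_iff f g _ _).mp h) ((erelD_iff f g _ _).mp h'))⟩
  · intro a b ha
    constructor
    · intro h
      exact (equivD_ninj f g hB hC ((erelD_iff f g a b).mp h)).mp ha
    · intro hb
      exact (erelD_iff f g a b).mpr (Or.inl ⟨ha, hb⟩)

lemma main_j (hB : IsT0Model B) {n : ℕ} (x y : Fin (n + 1) → B) :
    EquivD f g n (Sum.inl ∘ x) (Sum.inl ∘ y) ↔ ERel n x y := by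
  constructor
  · rintro (⟨hx, hy⟩ | hxy | ⟨x', y', hx, hy, h⟩ | ⟨x', y', hx, hy, h⟩ |
      ⟨x', y', a, hx, hy, h1, h2⟩ | ⟨x', y', a, hy, hx, h1, h2⟩)
    · exact ((hB n).2 x y ((ninj_comp Sum.inl_injective).mp hx)).mpr
        ((ninj_comp Sum.inl_injective).mp hy)
    · have : x = y := comp_cancel Sum.inl_injective hxy
      exact this ▸ (hB n).1.refl x
    · obtain rfl : x = x' := comp_cancel Sum.inl_injective hx
      obtain rfl : y = y' := comp_cancel Sum.inl_injective hy
      exact h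
    · obtain ⟨a, rfl, rfl⟩ := inl_eq_kf_tuple f g hx
      obtain ⟨a', ha1, ha2⟩ := inl_eq_kf_tuple f g hy
      subst ha1; subst ha2
      exact (erel_fg f g _ _).mpr h
    · obtain rfl : x = x' := comp_cancel Sum.inl_injective hx
      obtain ⟨a', ha1, ha2⟩ := inl_eq_kf_tuple f g hy
      subst ha1; subst ha2
      have h3 : ERel n (⇑f ∘ a) (⇑f ∘ a') := (erel_fg f g _ _).mpr h2
      exact (hB n).1.trans h1 h3
    · obtain rfl : y = y' := comp_cancel Sum.inl_injective hy
      obtain ⟨a', ha1, ha2⟩ := inl_eq_kf_tuple f g hx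
      subst ha1; subst ha2
      have h3 : ERel n (⇑f ∘ a) (⇑f ∘ a') := (erel_fg f g _ _).mpr h2
      exact (hB n).1.symm ((hB n).1.trans h1 h3)
  · intro h
    exact Or.inr (Or.inr (Or.inl ⟨x, y, rfl, rfl, h⟩))

lemma main_k (hC : IsT0Model C) {n : ℕ} (x y : Fin (n + 1) → C) :
    EquivD f g n (kf f g ∘ x) (kf f g ∘ y) ↔ ERel n x y := by
  constructor
  · rintro (⟨hx, hy⟩ | hxy | ⟨x', y', hx, hy, h⟩ | ⟨x', y', hx, hy, h⟩ |
      ⟨x', y', a, hx, hy, h1, h2⟩ | ⟨x', y', a, hy, hx, h1, h2⟩)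
    · exact ((hC n).2 x y ((ninj_comp (kf_inj f g)).mp hx)).mpr
        ((ninj_comp (kf_inj f g)).mp hy)
    · have : x = y := comp_cancel (kf_inj f g) hxy
      exact this ▸ (hC n).1.refl x
    · obtain ⟨a, ha1, ha2⟩ := inl_eq_kf_tuple f g hx.symm
      obtain ⟨a', hb1, hb2⟩ := inl_eq_kf_tuple f g hy.symm
      subst ha1; subst ha2; subst hb1; subst hb2
      exact (erel_fg f g _ _).mp h
    · obtain rfl : x = x' := comp_cancel (kf_inj f g) hx
      obtain rfl : y = y' := comp_cancel (kf_inj f g) hy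
      exact h
    · -- x from kf equals inl∘x'
      obtain ⟨a1, ha1, ha2⟩ := inl_eq_kf_tuple f g hx.symm
      subst ha1; subst ha2
      obtain rfl : y = y' := comp_cancel (kf_inj f g) hy
      have h3 : ERel n (⇑g ∘ a1) (⇑g ∘ a) := (erel_fg f g _ _).mp h1
      exact (hC n).1.trans h3 h2
    · obtain ⟨a1, ha1, ha2⟩ := inl_eq_kf_tuple f g hy.symm
      subst ha1; subst ha2
      obtain rfl : x = x' := comp_cancel (kf_inj f g) hx
      have h3 : ERel n (⇑g ∘ a1) (⇑g ∘ a) := (erel_fg f g _ _).mp h1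
      exact (hC n).1.symm ((hC n).1.trans h3 h2)
  · intro h
    exact Or.inr (Or.inr (Or.inr (Or.inl ⟨x, y, rfl, rfl, h⟩)))

/-- The embedding of `B` into the amalgam. -/
noncomputable def jEmb (hB : IsT0Model B) : @Embedding LangE B (B ⊕ {c : C // c ∉ Set.range ⇑g})
    _ (structD f g) := by
  letI := structD f g
  exact
  { toFun := Sum.inl
    inj' := Sum.inl_injective
    map_fun' := fun F _ => F.elim
    map_rel' := by
      intro l r v
      rw [relMap_iff, relMap_iff, erelD_iff]
      exact main_j f g hB (fun i => v (Fin.cast r.2.symm (Fin.castAdd _ i)))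
        (fun i => v (Fin.cast r.2.symm (Fin.natAdd _ i))) }

/-- The embedding of `C` into the amalgam. -/
noncomputable def kEmb (hC : IsT0Model C) : @Embedding LangE C (B ⊕ {c : C // c ∉ Set.range ⇑g})
    _ (structD f g) := by
  letI := structD f g
  exact
  { toFun := kf f g
    inj' := kf_inj f g
    map_fun' := fun F _ => F.elim
    map_rel' := by
      intro l r v
      rw [relMap_iff, relMap_iff, erelD_iff]
      exact main_k f g hC (fun i => v (Fin.cast r.2.symm (Fin.castAdd _ i)))
        (fun i => v (Fin.cast r.2.symm (Fin.natAdd _ i))) }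

lemma amalgamation (hB : IsT0Model B) (hC : IsT0Model C) :
    ∃ (D : Type u) (_ : LangE.Structure D), IsT0Model D ∧
      ∃ (f' : B ↪[LangE] D) (g' : C ↪[LangE] D), f'.comp f = g'.comp g := by
  refine ⟨B ⊕ {c : C // c ∉ Set.range ⇑g}, structD f g, isT0_D f g hB hC,
    jEmb f g hB, kEmb f g hC, ?_⟩
  letI := structD f g
  apply Embedding.ext
  intro a
  exact (kf_g f g a).symm

end Amalgam

/-- The empty `L_E`-structure. -/
def structPEmpty : LangE.Structure PEmpty.{u + 1} where
  funMap := fun F _ => F.elim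
  RelMap := fun _ _ => False

lemma isT0_PEmpty : @IsT0Model PEmpty.{u + 1} structPEmpty := by
  letI := structPEmpty
  intro n
  refine ⟨⟨fun x => (x 0).elim, fun {x y} _ => (x 0).elim, fun {x y z} _ _ => (x 0).elim⟩,
    fun a b _ => (a 0).elim⟩

/-- Embedding of the empty structure into anything. -/
def pemptyEmb (M : Type u) [LangE.Structure M] :
    @Embedding LangE PEmpty.{u + 1} M structPEmpty _ := by
  letI := structPEmpty
  exact
  { toFun := PEmpty.elim
    inj' := fun a => a.elim
    map_fun' := fun F _ => F.elim
    map_rel' := by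
      intro l r v
      obtain ⟨m, rfl⟩ := r
      exact (v ⟨0, by omega⟩).elim }

end Statement12Aux

open Statement12Aux in
/-- the class of all `L_E`-structures satisfying `T⁰_E` (not only the finite
ones) has the joint embedding property and the amalgamation property with respect to
`L_E`-embeddings. -/
theorem statement12 :
    (∀ (A B : Type u) (_ : LangE.Structure A) (_ : LangE.Structure B),
      IsT0Model A → IsT0Model B →
        ∃ (D : Type u) (_ : LangE.Structure D), IsT0Model D ∧
          Nonempty (A ↪[LangE] D) ∧ Nonempty (B ↪[LangE] D)) ∧
    (∀ (A B C : Type u) (_ : LangE.Structure A) (_ : LangE.Structure B)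
        (_ : LangE.Structure C),
      IsT0Model A → IsT0Model B → IsT0Model C →
        ∀ (f : A ↪[LangE] B) (g : A ↪[LangE] C),
          ∃ (D : Type u) (_ : LangE.Structure D), IsT0Model D ∧
            ∃ (f' : B ↪[LangE] D) (g' : C ↪[LangE] D), f'.comp f = g'.comp g) := by
  constructor
  · intro A B iA iB hA hB
    letI := iA; letI := iB
    letI := structPEmpty.{u}
    obtain ⟨D, iD, hD, f', g', _⟩ :=
      amalgamation (pemptyEmb A) (pemptyEmb B) hA hB
    exact ⟨D, iD, hD, ⟨f'⟩, ⟨g'⟩⟩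
  · intro A B C iA iB iC hA hB hC f g
    letI := iA; letI := iB; letI := iC
    exact amalgamation f g hB hC
end
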